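/- Let H be a Hopf algebra over a field k with bijective antipode S, and let λ : H → k be a nonzero linear functional that is simultaneously a left integral (h₁·λ(h₂) = λ(h)·1 for all h) and a right integral (λ(h₁)·h₂ = λ(h)·1 for all h) for H in H⁎, and satisfies λ ∘ S = λ. Assume the map H → H⁎, h ↦ λ ↼ h, is injective. Then S² = id_H if and only if the bilinear form B(x, y) := λ(x·S(y)) is symmetric, i.e. λ(x·S(y)) = λ(y·S(x)) for all x, y ∈ H. -/

import Mathlib

/-!
Helper definitions for Sweedler-notation expressions in a Hopf algebra `H` over a field `k`.
-/

open TensorProduct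

variable {k H : Type*} [Field k] [Ring H] [HopfAlgebra k H]

/-- `swl f h = f(h₁) • h₂` in Sweedler notation. -/
noncomputable def swl (f : H →ₗ[k] k) : H →ₗ[k] H :=
  (TensorProduct.lid k H).toLinearMap ∘ₗ (f.rTensor H) ∘ₗ Coalgebra.comul

/-- `swr f h = f(h₂) • h₁` in Sweedler notation. -/
noncomputable def swr (f : H →ₗ[k] k) : H →ₗ[k] H :=
  (TensorProduct.rid k H).toLinearMap ∘ₗ (f.lTensor H) ∘ₗ Coalgebra.comul

/-- `sw2 f g h = f(h₁) * g(h₂)`, an element of `H`, in Sweedler notation. -/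
noncomputable def sw2 (f g : H →ₗ[k] H) : H →ₗ[k] H :=
  (LinearMap.mul' k H) ∘ₗ (TensorProduct.map f g) ∘ₗ Coalgebra.comul

/-- `sw2k f g h = f(h₁) * g(h₂)`, a scalar, in Sweedler notation. -/
noncomputable def sw2k (f g : H →ₗ[k] k) : H →ₗ[k] k :=
  (LinearMap.mul' k k) ∘ₗ (TensorProduct.map f g) ∘ₗ Coalgebra.comul

/-- `comul3 h = (h₁ ⊗ h₂) ⊗ h₃`, the iterated comultiplication `(Δ ⊗ id)Δ`. -/
noncomputable def comul3 : H →ₗ[k] (H ⊗[k] H) ⊗[k] H :=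
  (LinearMap.rTensor H Coalgebra.comul) ∘ₗ Coalgebra.comul

/-- `sw3 f g e h = f(h₁) * g(h₂) * e(h₃)`, an element of `H`, in Sweedler notation. -/
noncomputable def sw3 (f g e : H →ₗ[k] H) : H →ₗ[k] H :=
  (LinearMap.mul' k H) ∘ₗ
    (TensorProduct.map ((LinearMap.mul' k H) ∘ₗ TensorProduct.map f g) e) ∘ₗ comul3


noncomputable def mulRepr {ι κ : Type*} {a b : H} (ra : Coalgebra.Repr k a ι) (rb : Coalgebra.Repr k b κ) :
    Coalgebra.Repr k (a * b) (ι × κ) where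
  index := ra.index ×ˢ rb.index
  left := fun p => ra.left p.1 * rb.left p.2
  right := fun p => ra.right p.1 * rb.right p.2
  eq := by
    rw [Finset.sum_product, Bialgebra.comul_mul, ← ra.eq, ← rb.eq, Finset.sum_mul_sum]
    simp [Algebra.TensorProduct.tmul_mul_tmul]

lemma sum_counit_smul_right' {ι : Type*} {a : H} (r : Coalgebra.Repr k a ι) :
    ∑ i ∈ r.index, Coalgebra.counit (R := k) (r.left i) • r.right i = a := by
  have h := congrArg (TensorProduct.lid k H) (Coalgebra.sum_counit_tmul_eq r)
  simp only [map_sum, TensorProduct.lid_tmul] at h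
  simpa using h

lemma sum_counit_smul_left' {ι : Type*} {a : H} (r : Coalgebra.Repr k a ι) :
    ∑ i ∈ r.index, Coalgebra.counit (R := k) (r.right i) • r.left i = a := by
  have h := congrArg (TensorProduct.rid k H) (Coalgebra.sum_tmul_counit_eq r)
  simp only [map_sum, TensorProduct.rid_tmul] at h
  simpa using h

lemma key_L1 {ι κ : Type*} {a : H} (ra : Coalgebra.Repr k a ι)
    (ra2 : ∀ i : ι, Coalgebra.Repr k (ra.right i) κ) :
    ∑ i ∈ ra.index, ∑ p ∈ (ra2 i).index,
      (HopfAlgebra.antipode (R := k) (ra.left i) * (ra2 i).left p) ⊗ₜ[k] (ra2 i).right p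
      = (1 : H) ⊗ₜ[k] a := by
  classical
  have h := Coalgebra.sum_tmul_tmul_eq ra (fun i => Coalgebra.Repr.arbitrary k (ra.left i)) ra2
  have h2 := congrArg (((LinearMap.mul' k H).rTensor H) ∘ₗ
    ((TensorProduct.assoc k H H H).symm.toLinearMap) ∘ₗ
    ((HopfAlgebra.antipode (R := k) (A := H)).rTensor (H ⊗[k] H))) h
  simp only [map_sum, LinearMap.comp_apply, LinearEquiv.coe_coe, LinearMap.rTensor_tmul,
    TensorProduct.assoc_symm_tmul, LinearMap.mul'_apply] at h2
  rw [← h2]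
  simp_rw [← TensorProduct.sum_tmul]
  have h3 : ∀ x ∈ ra.index,
      (∑ p ∈ (Coalgebra.Repr.arbitrary k (ra.left x)).index,
          HopfAlgebra.antipode (R := k) ((Coalgebra.Repr.arbitrary k (ra.left x)).left p) *
            (Coalgebra.Repr.arbitrary k (ra.left x)).right p) ⊗ₜ[k] ra.right x =
      Coalgebra.counit (R := k) (ra.left x) • ((1 : H) ⊗ₜ[k] ra.right x) := by
    intro x _
    rw [HopfAlgebra.sum_antipode_mul_eq_algebraMap_counit, Algebra.algebraMap_eq_smul_one,
      TensorProduct.smul_tmul']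
  rw [Finset.sum_congr rfl h3]
  simp_rw [← TensorProduct.tmul_smul, ← TensorProduct.tmul_sum]
  rw [sum_counit_smul_right']

lemma antipode_mul_anti (a b : H) :
    HopfAlgebra.antipode (R := k) (a * b) =
      HopfAlgebra.antipode (R := k) b * HopfAlgebra.antipode (R := k) a := by
  classical
  set S : H →ₗ[k] H := HopfAlgebra.antipode (R := k) (A := H) with hSdef
  set ra := Coalgebra.Repr.arbitrary k a with hra
  set rb := Coalgebra.Repr.arbitrary k b with hrb
  set ra2 : ∀ i : H × H, Coalgebra.Repr k (ra.right i) (H × H) :=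
    fun i => Coalgebra.Repr.arbitrary k (ra.right i) with hra2
  set rb2 : ∀ j : H × H, Coalgebra.Repr k (rb.right j) (H × H) :=
    fun j => Coalgebra.Repr.arbitrary k (rb.right j) with hrb2
  have step1 : S b * S a = ∑ j ∈ rb.index, ∑ i ∈ ra.index,
      (Coalgebra.counit (R := k) (ra.right i) * Coalgebra.counit (R := k) (rb.right j)) •
        (S (rb.left j) * S (ra.left i)) := by
    conv_lhs => rw [← sum_counit_smul_left' rb, ← sum_counit_smul_left' ra]
    rw [map_sum, map_sum, Finset.sum_mul_sum]
    refine Finset.sum_congr rfl fun j _ => Finset.sum_congr rfl fun i _ => ?_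
    rw [map_smul, map_smul, smul_mul_smul_comm, mul_comm]
  have step2 : ∀ j ∈ rb.index, ∀ i ∈ ra.index,
      (Coalgebra.counit (R := k) (ra.right i) * Coalgebra.counit (R := k) (rb.right j)) •
        (S (rb.left j) * S (ra.left i))
      = ∑ q ∈ (rb2 j).index, ∑ p ∈ (ra2 i).index,
          (S (rb.left j) * S (ra.left i)) *
            (((ra2 i).left p * (rb2 j).left q) *
              S ((ra2 i).right p * (rb2 j).right q)) := by
    intro j _ i _
    have h := HopfAlgebra.sum_mul_antipode_eq_algebraMap_counit (R := k) (mulRepr (ra2 i) (rb2 j))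
    simp only [mulRepr] at h
    rw [Finset.sum_product] at h
    calc (Coalgebra.counit (R := k) (ra.right i) * Coalgebra.counit (R := k) (rb.right j)) •
          (S (rb.left j) * S (ra.left i))
        = (S (rb.left j) * S (ra.left i)) *
            algebraMap k H (Coalgebra.counit (R := k) (ra.right i * rb.right j)) := by
          rw [Bialgebra.counit_mul, Algebra.algebraMap_eq_smul_one, mul_smul_comm, mul_one]
      _ = (S (rb.left j) * S (ra.left i)) *
            ∑ p ∈ (ra2 i).index, ∑ q ∈ (rb2 j).index,
              ((ra2 i).left p * (rb2 j).left q) *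
                S ((ra2 i).right p * (rb2 j).right q) := by rw [h]
      _ = _ := by
          rw [Finset.mul_sum]
          rw [Finset.sum_comm]
          refine Finset.sum_congr rfl fun q _ => ?_
          rw [Finset.mul_sum]
  have step5 : ∀ j q, ∑ i ∈ ra.index, ∑ p ∈ (ra2 i).index,
      (S (rb.left j) * S (ra.left i)) *
        (((ra2 i).left p * (rb2 j).left q) * S ((ra2 i).right p * (rb2 j).right q))
      = (S (rb.left j) * (rb2 j).left q) * S (a * (rb2 j).right q) := by
    intro j q
    have h := congrArg (LinearMap.mul' k H ∘ₗ TensorProduct.map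
        (LinearMap.mulLeft k (S (rb.left j)) ∘ₗ LinearMap.mulRight k ((rb2 j).left q))
        (S ∘ₗ LinearMap.mulRight k ((rb2 j).right q))) (key_L1 ra ra2)
    simp only [map_sum, LinearMap.comp_apply, TensorProduct.map_tmul, LinearMap.mul'_apply,
      LinearMap.mulLeft_apply, LinearMap.mulRight_apply] at h
    simp only [mul_assoc, one_mul] at h ⊢
    exact h
  have step6 : ∑ j ∈ rb.index, ∑ q ∈ (rb2 j).index,
      (S (rb.left j) * (rb2 j).left q) * S (a * (rb2 j).right q) = S (a * b) := by
    have h := congrArg (LinearMap.mul' k H ∘ₗ TensorProduct.map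
        (LinearMap.id (R := k) (M := H)) (S ∘ₗ LinearMap.mulLeft k a)) (key_L1 rb rb2)
    simp only [map_sum, LinearMap.comp_apply, TensorProduct.map_tmul, LinearMap.mul'_apply,
      LinearMap.id_apply, LinearMap.mulLeft_apply, one_mul] at h
    exact h
  calc S (a * b) = ∑ j ∈ rb.index, ∑ q ∈ (rb2 j).index,
        (S (rb.left j) * (rb2 j).left q) * S (a * (rb2 j).right q) := step6.symm
    _ = ∑ j ∈ rb.index, ∑ q ∈ (rb2 j).index, ∑ i ∈ ra.index, ∑ p ∈ (ra2 i).index,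
        (S (rb.left j) * S (ra.left i)) *
          (((ra2 i).left p * (rb2 j).left q) *
            S ((ra2 i).right p * (rb2 j).right q)) := by
        refine Finset.sum_congr rfl fun j _ => Finset.sum_congr rfl fun q _ => ?_
        rw [step5]
    _ = S b * S a := by
        rw [step1]
        refine Finset.sum_congr rfl fun j hj => ?_
        rw [Finset.sum_comm]
        exact Finset.sum_congr rfl fun i hi => (step2 j hj i hi).symm

/-- `H` Hopf algebra over `k` with bijective antipode, `λ ≠ 0` a
two-sided integral for `H` in `H⁎` with `λ ∘ S = λ` and `h ↦ λ ↼ h` injective.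
Then `S² = id` iff the bilinear form `B(x,y) = λ(x·S(y))` is symmetric. -/
theorem statement13
    (hS : Function.Bijective ⇑(HopfAlgebra.antipode (R := k) (A := H)))
    (lam : H →ₗ[k] k) (hlam0 : lam ≠ 0)
    (hlaml : ∀ h : H, swr lam h = lam h • (1 : H))
    (hlamr : ∀ h : H, swl lam h = lam h • (1 : H))
    (hlamS : lam ∘ₗ HopfAlgebra.antipode (R := k) = lam)
    (hinj : Function.Injective (fun h : H => lam ∘ₗ LinearMap.mulLeft k h)) :
    (∀ h : H, HopfAlgebra.antipode (R := k) (HopfAlgebra.antipode (R := k) h) = h) ↔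
      (∀ x y : H,
        lam (x * HopfAlgebra.antipode (R := k) y) =
          lam (y * HopfAlgebra.antipode (R := k) x)) := by
  have hlamS' : ∀ w : H, lam (HopfAlgebra.antipode (R := k) w) = lam w :=
    fun w => LinearMap.congr_fun hlamS w
  constructor
  · intro hSS x y
    calc lam (x * HopfAlgebra.antipode (R := k) y)
        = lam (HopfAlgebra.antipode (R := k) (y * HopfAlgebra.antipode (R := k) x)) := by
          rw [antipode_mul_anti, hSS]
      _ = lam (y * HopfAlgebra.antipode (R := k) x) := hlamS' _
  · intro hsym h
    have key : (fun h : H => lam ∘ₗ LinearMap.mulLeft k h)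
        (HopfAlgebra.antipode (R := k) (HopfAlgebra.antipode (R := k) h)) =
        (fun h : H => lam ∘ₗ LinearMap.mulLeft k h) h := by
      ext x
      obtain ⟨y, rfl⟩ := hS.2 x
      simp only [LinearMap.coe_comp, Function.comp_apply, LinearMap.mulLeft_apply]
      rw [← antipode_mul_anti, hlamS']
      exact (hsym h y).symm
    exact hinj key
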